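/- Let C ⊆ ℝ² be a convex set and let u, v, w ∈ C each be nondominated in C, with u₁ < v₁ < w₁. Then v₂ ≤ u₂ + ((w₂ − u₂)/(w₁ − u₁))·(v₁ − u₁); that is, every nondominated point of C lies on or below the chord joining any two nondominated points whose first coordinates enclose its own. -/

import Mathlib

/-- `u` dominates `v` componentwise in `ℝ²`. -/
def Dominates (u v : ℝ × ℝ) : Prop := u ≤ v ∧ u ≠ v

/-- `s` is nondominated in `S`. -/
def NondomIn (s : ℝ × ℝ) (S : Set (ℝ × ℝ)) : Prop :=
  s ∈ S ∧ ∀ s' ∈ S, ¬ Dominates s' s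

theorem nondom_of_convex_below_chord (C : Set (ℝ × ℝ)) (hC : Convex ℝ C)
    (u v w : ℝ × ℝ) (hu : NondomIn u C) (hv : NondomIn v C) (hw : NondomIn w C)
    (huv : u.1 < v.1) (hvw : v.1 < w.1) :
    v.2 ≤ u.2 + ((w.2 - u.2) / (w.1 - u.1)) * (v.1 - u.1) := by
  by_contra h
  push_neg at h
  have hwu : (0:ℝ) < w.1 - u.1 := by linarith
  set t : ℝ := (v.1 - u.1) / (w.1 - u.1) with ht
  have ht0 : 0 ≤ t := div_nonneg (by linarith) hwu.le
  have ht1 : 1 - t = (w.1 - v.1) / (w.1 - u.1) := by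
    rw [ht]; field_simp; ring
  have ht1' : 0 ≤ 1 - t := by
    rw [ht1]; exact div_nonneg (by linarith) hwu.le
  have hp : (1 - t) • u + t • w ∈ C := hC hu.1 hw.1 ht1' ht0 (by ring)
  set p : ℝ × ℝ := (1 - t) • u + t • w with hpdef
  have hp1 : p.1 = v.1 := by
    simp only [hpdef, Prod.fst_add, Prod.smul_fst, smul_eq_mul]
    rw [ht1, ht]
    field_simp
    ring
  have hp2 : p.2 = u.2 + ((w.2 - u.2) / (w.1 - u.1)) * (v.1 - u.1) := by
    simp only [hpdef, Prod.snd_add, Prod.smul_snd, smul_eq_mul]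
    rw [ht1, ht]
    field_simp
    ring
  exact hv.2 p hp ⟨⟨le_of_eq hp1, by rw [hp2]; linarith⟩,
    fun he => by rw [he] at hp2; linarith⟩
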